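/- Let τ be a topology on an n-element set X all of whose minimal open sets are singletons, say {x_1}, ..., {x_{n-1}} (n-1 of them). Then τ is obtained by adjoining to the powerset of {x_1,...,x_{n-1}} all supersets of some set {x_1, ..., x_l, x_n}, and |τ| = 2^{n-1} + 2^{n-l-1} for some 1 ≤ l ≤ n-1. -/

import Mathlib

def IsTopology {n : ℕ} (τ : Finset (Finset (Fin n))) : Prop :=
  ∅ ∈ τ ∧ Finset.univ ∈ τ ∧
    (∀ s ∈ τ, ∀ t ∈ τ, s ∪ t ∈ τ) ∧ (∀ s ∈ τ, ∀ t ∈ τ, s ∩ t ∈ τ)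

/-- A minimal open set: a nonempty open set meeting every open set in `∅` or in itself. -/
def IsMinimalOpen {n : ℕ} (τ : Finset (Finset (Fin n))) (A : Finset (Fin n)) : Prop :=
  A ∈ τ ∧ A ≠ ∅ ∧ ∀ U ∈ τ, A ∩ U = ∅ ∨ A ∩ U = A

/-- If the minimal open sets of `τ` are exactly the `n-1` singletons `{x}` for
`x ≠ x_n` (the last element), then `τ` consists of the subsets of `X ∖ {x_n}` together
with all supersets of some set `S ∪ {x_n}` with `∅ ≠ S ⊆ X ∖ {x_n}`, `|S| = l`,
and `|τ| = 2^{n-1} + 2^{n-l-1}`. -/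
theorem structure_of_topology_with_singleton_minimal_opens {n : ℕ} (hn : 2 ≤ n)
    (τ : Finset (Finset (Fin n))) (hτ : IsTopology τ)
    (hmin : ∀ A : Finset (Fin n),
      IsMinimalOpen τ A ↔ ∃ i : Fin n, (i : ℕ) < n - 1 ∧ A = {i}) :
    ∃ S : Finset (Fin n), S ⊆ (Finset.univ.filter fun i : Fin n => (i : ℕ) < n - 1) ∧
      1 ≤ S.card ∧ S.card ≤ n - 1 ∧
      τ = Finset.univ.filter (fun s : Finset (Fin n) =>
        s ⊆ (Finset.univ.filter fun i : Fin n => (i : ℕ) < n - 1) ∨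
        insert (⟨n - 1, by omega⟩ : Fin n) S ⊆ s) ∧
      τ.card = 2 ^ (n - 1) + 2 ^ (n - S.card - 1) := by
  obtain ⟨hempty, huniv, hunion, hinter⟩ := hτ
  have hn1 : n - 1 < n := by omega
  set e : Fin n := ⟨n - 1, hn1⟩ with he
  set C : Finset (Fin n) := Finset.univ.filter fun i : Fin n => (i : ℕ) < n - 1 with hC
  have hmemC : ∀ i : Fin n, i ∈ C ↔ (i : ℕ) < n - 1 := by
    intro i; simp [hC]
  have hCne : ∀ i : Fin n, i ∈ C ↔ i ≠ e := by
    intro i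
    rw [hmemC]
    constructor
    · intro h hcontra; rw [hcontra] at h; simp [he] at h
    · intro h
      have hlt := i.isLt
      rcases Nat.lt_or_ge (i : ℕ) (n - 1) with h' | h'
      · exact h'
      · exact absurd (Fin.ext (show (i : ℕ) = n - 1 by omega) : i = e) h
  have hsing : ∀ i : Fin n, (i : ℕ) < n - 1 → ({i} : Finset (Fin n)) ∈ τ := fun i hi =>
    ((hmin {i}).mpr ⟨i, hi, rfl⟩).1
  -- all subsets of C are open
  have hsub : ∀ s : Finset (Fin n), s ⊆ C → s ∈ τ := by
    intro s
    induction s using Finset.induction_on with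
    | empty => intro _; exact hempty
    | @insert a s ha ih =>
      intro hs
      have h1 : ({a} : Finset (Fin n)) ∈ τ := by
        apply hsing
        have := hs (Finset.mem_insert_self a s)
        rwa [hmemC] at this
      have h2 : s ∈ τ := ih (fun x hx => hs (Finset.mem_insert_of_mem hx))
      have heq : insert a s = {a} ∪ s := by rw [Finset.insert_eq]
      rw [heq]; exact hunion _ h1 _ h2
  -- finite intersections of opens are open
  have hinf : ∀ F : Finset (Finset (Fin n)), F ⊆ τ → F.inf id ∈ τ := by
    intro F
    induction F using Finset.induction_on with
    | empty => intro _; simpa using huniv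
    | @insert a F ha ih =>
      intro hF
      rw [Finset.inf_insert]
      have h1 : a ∈ τ := hF (Finset.mem_insert_self a F)
      have h2 : F.inf id ∈ τ := ih (fun x hx => hF (Finset.mem_insert_of_mem hx))
      simpa [id, Finset.inf_eq_inter] using hinter _ h1 _ h2
  set M : Finset (Fin n) := (τ.filter fun U => e ∈ U).inf id with hM
  have hMτ : M ∈ τ := hinf _ (Finset.filter_subset _ _)
  have hmemM : ∀ x : Fin n, x ∈ M ↔ ∀ U ∈ τ, e ∈ U → x ∈ U := by
    intro x
    rw [hM, Finset.mem_inf]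
    constructor
    · intro h U hU heU; exact h U (Finset.mem_filter.mpr ⟨hU, heU⟩)
    · intro h U hU
      rw [Finset.mem_filter] at hU
      exact h U hU.1 hU.2
  have heM : e ∈ M := by rw [hmemM]; intro U _ heU; exact heU
  have hMle : ∀ U ∈ τ, e ∈ U → M ⊆ U := by
    intro U hU heU x hx
    rw [hmemM] at hx
    exact hx U hU heU
  -- M ≠ {e}
  have hMne : ∃ i ∈ M, i ≠ e := by
    by_contra hcon
    push_neg at hcon
    have hMeq : M = {e} := by
      apply Finset.Subset.antisymm
      · intro x hx
        simp [hcon x hx]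
      · intro x hx
        simp at hx
        rwa [hx]
    have : IsMinimalOpen τ {e} := by
      refine ⟨hMeq ▸ hMτ, by simp, ?_⟩
      intro U hU
      by_cases heU : e ∈ U
      · right; ext x; simp; rintro rfl; exact heU
      · left; ext x; simp; rintro rfl; exact heU
    obtain ⟨i, hi, hie⟩ := (hmin {e}).mp this
    have : e = i := by
      have := Finset.mem_singleton.mp (hie ▸ Finset.mem_singleton_self e)
      exact this
    rw [← this] at hi
    simp [he] at hi
  -- characterization of τ
  have hchar : ∀ s : Finset (Fin n), s ∈ τ ↔ (s ⊆ C ∨ M ⊆ s) := by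
    intro s
    constructor
    · intro hs
      by_cases hes : e ∈ s
      · right; exact hMle s hs hes
      · left
        intro x hx
        rw [hCne]
        rintro rfl
        exact hes hx
    · rintro (h | h)
      · exact hsub s h
      · have heq : s = M ∪ s.erase e := by
          apply Finset.Subset.antisymm
          · intro x hx
            by_cases hxe : x = e
            · exact Finset.mem_union_left _ (hxe ▸ heM)
            · exact Finset.mem_union_right _ (Finset.mem_erase.mpr ⟨hxe, hx⟩)
          · intro x hx
            rcases Finset.mem_union.mp hx with h' | h'
            · exact h h'
            · exact (Finset.mem_erase.mp h').2
        rw [heq]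
        exact hunion _ hMτ _ (hsub _ (fun x hx => (hCne x).mpr (Finset.mem_erase.mp hx).1))
  set S : Finset (Fin n) := M.erase e with hS
  have heS : e ∉ S := Finset.notMem_erase e M
  have hins : insert e S = M := Finset.insert_erase heM
  have hSC : S ⊆ C := fun x hx => (hCne x).mpr (Finset.mem_erase.mp hx).1
  have hCcard : C.card = n - 1 := by
    have : C = Finset.univ.erase e := by
      ext x
      rw [hCne]
      simp
    rw [this, Finset.card_erase_of_mem (Finset.mem_univ e)]
    simp
  have hScard1 : 1 ≤ S.card := by
    obtain ⟨i, hi, hie⟩ := hMne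
    have : i ∈ S := Finset.mem_erase.mpr ⟨hie, hi⟩
    exact Finset.card_pos.mpr ⟨i, this⟩
  have hMcard : M.card = S.card + 1 := by
    rw [← hins, Finset.card_insert_of_notMem heS]
  refine ⟨S, hSC, hScard1, le_trans (Finset.card_le_card hSC) (le_of_eq hCcard), ?_, ?_⟩
  · ext s
    simp only [Finset.mem_filter, Finset.mem_univ, true_and]
    rw [hchar s]
    constructor
    · rintro (h | h)
      · exact Or.inl h
      · right
        show insert e S ⊆ s
        rw [hins]; exact h
    · rintro (h | h)
      · exact Or.inl h
      · right
        have h' : insert e S ⊆ s := h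
        rw [hins] at h'; exact h'
  · -- cardinality
    have hτeq : τ = C.powerset ∪ (Finset.univ \ M).powerset.image (fun t => t ∪ M) := by
      ext s
      rw [hchar s]
      simp only [Finset.mem_union, Finset.mem_powerset, Finset.mem_image]
      constructor
      · rintro (h | h)
        · exact Or.inl h
        · right
          exact ⟨s \ M, by simp [Finset.sdiff_subset_sdiff, Finset.subset_univ,
            Finset.sdiff_subset], by rw [Finset.sdiff_union_self_eq_union,
            Finset.union_eq_left.mpr h]⟩
      · rintro (h | ⟨t, ht, rfl⟩)
        · exact Or.inl h
        · exact Or.inr Finset.subset_union_right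
    have hdisj : Disjoint (C.powerset) ((Finset.univ \ M).powerset.image (fun t => t ∪ M)) := by
      rw [Finset.disjoint_left]
      rintro s hs hs'
      rw [Finset.mem_powerset] at hs
      obtain ⟨t, _, rfl⟩ := Finset.mem_image.mp hs'
      have : e ∈ t ∪ M := Finset.mem_union_right _ heM
      have := (hCne e).mp (hs this)
      exact this rfl
    have hinj : Set.InjOn (fun t => t ∪ M) ((Finset.univ \ M).powerset : Set (Finset (Fin n))) := by
      intro a ha b hb hab
      simp only [Finset.coe_powerset, Set.mem_preimage, Set.mem_powerset_iff,
        Finset.coe_sdiff, Finset.coe_univ] at ha hb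
      have ha' : Disjoint a M := by
        rw [Finset.disjoint_left]
        intro x hx
        have := ha hx
        simp at this
        exact this
      have hb' : Disjoint b M := by
        rw [Finset.disjoint_left]
        intro x hx
        have := hb hx
        simp at this
        exact this
      have hab' : a ∪ M = b ∪ M := hab
      have : (a ∪ M) \ M = (b ∪ M) \ M := by rw [hab']
      rwa [Finset.union_sdiff_cancel_right ha', Finset.union_sdiff_cancel_right hb'] at this
    rw [hτeq, Finset.card_union_of_disjoint hdisj, Finset.card_image_of_injOn hinj,
      Finset.card_powerset, Finset.card_powerset, hCcard, Finset.card_sdiff_of_subset (Finset.subset_univ M)]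
    have hMle' : M.card ≤ n := by
      have := Finset.card_le_card (Finset.subset_univ M)
      simpa using this
    congr 1
    congr 1
    simp only [Finset.card_univ, Fintype.card_fin]
    omega
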